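/- arXiv:1708.04862 — 5 statements merged into one kernel-verified Lean document; each statement's English description precedes it below -/
import Mathlib

section
/- For any positive integers k and m with m = 3t for some integer t ≥ 1, and initial scores σ_i = 0 for all m candidates, there exists an assignment of Borda scores by 3 manipulators (each awarding a permutation of {0,1,...,m-1}) such that the maximum total score of any candidate is at most 5m/3 - 2. -/
/-- Score awarded by manipulator `c` (c = 0,1,2) to candidate `i`, for `m = 3t`. -/
def bordaScore (t c i : ℕ) : ℕ :=
  if (i % 3 + c) % 3 = 0 then 3 * t - 1 - i / 3
  else if (i % 3 + c) % 3 = 1 then t + i / 3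
  else t - 1 - i / 3

lemma bordaScore_lt (t c : ℕ) (ht : 1 ≤ t) (i : ℕ) (hi : i < 3 * t) :
    bordaScore t c i < 3 * t := by
  unfold bordaScore; split_ifs <;> omega

lemma bordaScore_inj (t c : ℕ) (i j : ℕ) (hi : i < 3 * t) (hj : j < 3 * t)
    (h : bordaScore t c i = bordaScore t c j) : i = j := by
  unfold bordaScore at h
  split_ifs at h <;> omega

/-- For m = 3t (t ≥ 1) candidates with all-zero initial scores, there is a
strategy for 3 Borda manipulators (each awarding a permutation of {0,...,m-1})
such that every candidate's total score is at most 5m/3 - 2 = 5t - 2. -/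
theorem stmt0 (m t : ℕ) (ht : 1 ≤ t) (hm : m = 3 * t) :
    ∃ π₁ π₂ π₃ : Equiv.Perm (Fin m),
      ∀ i : Fin m, ((π₁ i : ℕ) + (π₂ i : ℕ) + (π₃ i : ℕ)) ≤ 5 * t - 2 := by
  subst hm
  have mkPerm : ∀ c : ℕ, ∃ π : Equiv.Perm (Fin (3 * t)),
      ∀ i : Fin (3 * t), (π i : ℕ) = bordaScore t c i := by
    intro c
    have hinj : Function.Injective
        (fun i : Fin (3 * t) => (⟨bordaScore t c i, bordaScore_lt t c ht i i.isLt⟩ : Fin (3 * t))) := by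
      intro i j hij
      exact Fin.ext (bordaScore_inj t c i j i.isLt j.isLt (by simpa using congrArg Fin.val hij))
    refine ⟨Equiv.ofBijective _ (Finite.injective_iff_bijective.mp hinj), fun i => rfl⟩
  obtain ⟨π₁, h₁⟩ := mkPerm 0
  obtain ⟨π₂, h₂⟩ := mkPerm 1
  obtain ⟨π₃, h₃⟩ := mkPerm 2
  refine ⟨π₁, π₂, π₃, fun i => ?_⟩
  rw [h₁, h₂, h₃]
  have hi := i.isLt
  unfold bordaScore
  split_ifs <;> omega
end

section
/- For m = 3t candidates all with equal initial score, the REVERSE greedy algorithm with 3 manipulators produces an outcome in which some candidate attains a total score of 2(m-1), while an optimal strategy achieves maximum score at most 5m/3 - 2; hence REVERSE is worse than optimal by at least m/3 - 1 additively. -/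
/-- For m = 3t candidates with equal (zero) initial scores and 3 manipulators,
the REVERSE greedy algorithm (odd manipulators award 0,...,m-1 to candidates in order,
even manipulators award the reversed order m-1,...,0) produces some candidate with total
score 2(m-1), while an optimal strategy keeps every candidate at most 5m/3 - 2 = 5t - 2;
hence REVERSE is at least m/3 - 1 = t - 1 worse additively. -/
theorem stmt1 (m t : ℕ) (ht : 1 ≤ t) (hm : m = 3 * t) :
    (∃ i < m, (∑ ℓ ∈ Finset.range 3, (if ℓ % 2 = 0 then i else m - 1 - i)) = 2 * (m - 1)) ∧
    (∃ π₁ π₂ π₃ : Equiv.Perm (Fin m),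
      ∀ i : Fin m, ((π₁ i : ℕ) + (π₂ i : ℕ) + (π₃ i : ℕ)) ≤ 5 * t - 2) ∧
    t - 1 ≤ 2 * (m - 1) - (5 * t - 2) := by
  refine ⟨⟨m - 1, by omega, ?_⟩, ?_, by omega⟩
  · simp [Finset.sum_range_succ]
    omega
  · -- Construction: index candidates by pairs (a, b) ∈ Fin 3 × Fin t via
    -- finProdFinEquiv (value b + t * a).  Manipulator j rotates the block a by j
    -- and, for j = 1, reverses within the block.
    let E : Fin 3 × Fin t ≃ Fin m := finProdFinEquiv.trans (finCongr (by omega))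
    let P : Equiv.Perm (Fin 3) → Equiv.Perm (Fin t) → Equiv.Perm (Fin m) :=
      fun g f => (E.symm.trans ((Equiv.prodCongr g f).trans E))
    refine ⟨P 1 1, P (Equiv.addLeft 1) Fin.revPerm, P (Equiv.addLeft 2) 1, ?_⟩
    intro i
    obtain ⟨⟨a, b⟩, rfl⟩ := E.surjective i
    have hval : ∀ (g : Equiv.Perm (Fin 3)) (f : Equiv.Perm (Fin t)),
        ((P g f) (E (a, b)) : ℕ) = (f b : ℕ) + t * (g a : ℕ) := by
      intro g f
      have h1 : E.symm (E (a, b)) = (a, b) := E.symm_apply_apply _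
      simp only [P, Equiv.trans_apply, h1, Equiv.prodCongr_apply, Prod.map]
      simp [E, finProdFinEquiv]
    rw [hval, hval, hval]
    simp only [Equiv.Perm.one_apply]
    have hb : (b : ℕ) < t := b.isLt
    have hrev : ((Fin.revPerm b : Fin t) : ℕ) = t - 1 - (b : ℕ) := by
      simp [Fin.revPerm, Fin.rev]
      omega
    rw [hrev]
    have ha : (a : ℕ) + (((Equiv.addLeft 1 : Equiv.Perm (Fin 3)) a : ℕ))
        + (((Equiv.addLeft 2 : Equiv.Perm (Fin 3)) a : ℕ)) = 3 := by
      fin_cases a <;> decide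
    have ha3 := congrArg (t * ·) ha
    simp only [Nat.mul_add] at ha3
    omega
end

section
/- In the natural LP relaxation of Borda-UCM with one manipulator and m candidates each of initial score 0, the fractional optimum objective (minimum T such that a feasible fractional assignment exists) is at most (m-1)/2, while any integral solution has objective at least m-1; hence the additive integrality gap is at least (m-1)/2. -/
/-- Integrality gap of the natural LP for Borda-UCM with one manipulator and
m candidates of initial score 0: there is a feasible fractional assignment whose objective
is (m-1)/2, while every integral (0/1, doubly stochastic) solution has some candidate with
score at least m - 1; hence the additive gap is at least (m-1)/2. -/
theorem stmt3 (m : ℕ) (hm : 1 ≤ m) :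
    (∃ x : Fin m → Fin m → ℝ,
      (∀ i j, 0 ≤ x i j) ∧
      (∀ j, ∑ i, x i j = 1) ∧
      (∀ i, ∑ j, x i j = 1) ∧
      (∀ i, ∑ j : Fin m, ((j : ℕ) : ℝ) * x i j ≤ ((m : ℝ) - 1) / 2)) ∧
    (∀ x : Fin m → Fin m → ℕ, (∀ i j, x i j ≤ 1) →
      (∀ j, ∑ i, x i j = 1) → (∀ i, ∑ j, x i j = 1) →
      ∃ i, m - 1 ≤ ∑ j : Fin m, (j : ℕ) * x i j) := by
  have hm0 : (0:ℝ) < (m:ℝ) := by exact_mod_cast hm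
  constructor
  · refine ⟨fun _ _ => 1 / m, fun i j => by positivity, ?_, ?_, ?_⟩
    · intro j
      simp [Finset.sum_const, Finset.card_univ]
      field_simp
    · intro i
      simp [Finset.sum_const, Finset.card_univ]
      field_simp
    · intro i
      have hsum : ∑ j : Fin m, ((j : ℕ) : ℝ) = (m : ℝ) * ((m:ℝ) - 1) / 2 := by
        rw [Fin.sum_univ_eq_sum_range (fun j => ((j:ℕ):ℝ)) m]
        have h2 : ((∑ j ∈ Finset.range m, j) * 2 : ℕ) = m * (m - 1) :=
          Finset.sum_range_id_mul_two m
        have : (∑ j ∈ Finset.range m, (j:ℝ)) = ((∑ j ∈ Finset.range m, j : ℕ) : ℝ) := by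
          push_cast; ring
        rw [this]
        rcases Nat.exists_eq_add_of_le hm with ⟨c, rfl⟩
        have h3 := congrArg (Nat.cast : ℕ → ℝ) h2
        simp only [show 1 + c - 1 = c from by omega] at h3 ⊢
        push_cast at h3 ⊢
        linarith
      have heq : ∑ j : Fin m, ((j : ℕ) : ℝ) * (1 / m) = (∑ j : Fin m, ((j : ℕ) : ℝ)) * (1/m) := by
        rw [Finset.sum_mul]
      rw [heq, hsum]
      have : (m:ℝ) * ((m:ℝ) - 1) / 2 * (1 / m) = ((m:ℝ) - 1) / 2 := by
        field_simp
      rw [this]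
  · intro x _ hcol _
    have hml : m - 1 < m := Nat.sub_lt (by omega) one_pos
    set jl : Fin m := ⟨m - 1, hml⟩
    have h1 : ∑ i, x i jl = 1 := hcol jl
    have : ∃ i, x i jl ≠ 0 := by
      by_contra h
      push_neg at h
      simp [h] at h1
    obtain ⟨i, hi⟩ := this
    refine ⟨i, ?_⟩
    have h2 : (jl : ℕ) * x i jl ≤ ∑ j : Fin m, (j : ℕ) * x i j :=
      Finset.single_le_sum (f := fun j : Fin m => (j : ℕ) * x i j)
        (fun _ _ => Nat.zero_le _) (Finset.mem_univ jl)
    have : m - 1 ≤ (jl : ℕ) * x i jl := by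
      have : 1 ≤ x i jl := Nat.one_le_iff_ne_zero.mpr hi
      calc m - 1 = (jl : ℕ) * 1 := by simp [jl]
        _ ≤ (jl : ℕ) * x i jl := Nat.mul_le_mul_left _ this
    omega
end

section
/- Consider km events t_0,...,t_{km-1} sorted in nondecreasing order of their score index, where event t_ℓ has score index j(ℓ). If for every j the number of events with score index at most j is at most (j+1)k + B, then for every ℓ, the new score index ⌊ℓ/k⌋ assigned to event t_ℓ satisfies ⌊ℓ/k⌋ ≤ j(ℓ) + 1 + B/k. Consequently, for a nondecreasing score vector α with α_{i+β} - α_i ≤ g for all i (where β = ⌈1 + B/k⌉), the score change α_{⌊ℓ/k⌋} - α_{j(ℓ)} is at most g for every event. -/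
open Finset

/-- deterministic core of the UCM rounding correction. Given km events with
nondecreasing score labels j(ℓ) < m, if for every score index jj the number of events with
label ≤ jj is at most (jj+1)k + B, then the new label ⌊ℓ/k⌋ of the ℓ-th event satisfies
⌊ℓ/k⌋ ≤ j(ℓ) + 1 + B/k; consequently, for a nondecreasing score vector α with
α_{i+β} ≤ α_i + g for β = ⌈1 + B/k⌉ (= 1 + ⌈B/k⌉ = 1 + (B+k-1)/k in ℕ), the score change
α_{⌊ℓ/k⌋} - α_{j(ℓ)} is at most g for every event. -/
theorem stmt8 (m k B g : ℕ) (hk : 1 ≤ k) (j : ℕ → ℕ)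
    (hjm : ∀ ℓ < k * m, j ℓ < m)
    (hsorted : ∀ ℓ ℓ', ℓ ≤ ℓ' → ℓ' < k * m → j ℓ ≤ j ℓ')
    (hG : ∀ jj, ((Finset.range (k * m)).filter (fun ℓ => j ℓ ≤ jj)).card ≤ (jj + 1) * k + B)
    (α : ℕ → ℕ) (hmono : Monotone α)
    (hg : ∀ i, α (i + (1 + (B + k - 1) / k)) ≤ α i + g) :
    ∀ ℓ < k * m, ℓ / k ≤ j ℓ + 1 + B / k ∧ α (ℓ / k) ≤ α (j ℓ) + g := by
  intro ℓ hℓ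
  have hsub : Finset.range (ℓ + 1) ⊆ (Finset.range (k * m)).filter (fun ℓ' => j ℓ' ≤ j ℓ) := by
    intro x hx
    simp only [Finset.mem_range, Finset.mem_filter] at *
    exact ⟨lt_of_le_of_lt (Nat.lt_succ_iff.mp hx) hℓ,
      hsorted x ℓ (Nat.lt_succ_iff.mp hx) hℓ⟩
  have h1 : ℓ + 1 ≤ (j ℓ + 1) * k + B := by
    calc ℓ + 1 = (Finset.range (ℓ + 1)).card := (Finset.card_range _).symm
    _ ≤ _ := Finset.card_le_card hsub
    _ ≤ _ := hG (j ℓ)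
  have hB : B < k * (B / k + 1) := Nat.lt_mul_div_succ B hk
  have h2 : ℓ < k * (j ℓ + 1 + B / k + 1) := by
    have e : k * (j ℓ + 1 + B / k + 1) = (j ℓ + 1) * k + k * (B / k + 1) := by ring
    omega
  have hdiv : ℓ / k ≤ j ℓ + 1 + B / k := Nat.lt_succ_iff.mp (Nat.div_lt_of_lt_mul h2)
  refine ⟨hdiv, ?_⟩
  have hle : ℓ / k ≤ j ℓ + (1 + (B + k - 1) / k) := by
    have : B / k ≤ (B + k - 1) / k := Nat.div_le_div_right (by omega)
    omega
  calc α (ℓ / k) ≤ α (j ℓ + (1 + (B + k - 1) / k)) := hmono hle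
  _ ≤ α (j ℓ) + g := hg (j ℓ)
end

section
/- Suppose for a fixed voter there are m events (one per candidate), each with a score index in {0,...,m-1}, sorted nondecreasingly, and suppose for every j the number of events with score index at most j is at most (j+1) + B. If the event at rank r (0-indexed) is relabeled with score index r, then for a nondecreasing score vector α satisfying α_{i+β} - α_i ≤ g for all valid i with β = ⌈B⌉, the increase α_r - α_{j'} (where j' is the original score index of the rank-r event) is at most g; and after relabeling, each score index in {0,...,m-1} appears exactly once. -/
open Finset

/-- deterministic core of the WCM per-voter fixing step. For a fixed voter
there are m events (one per candidate) with nondecreasing score labels j(r) < m; if for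
every jj the number of events with label ≤ jj is at most (jj+1) + B, and the event at rank
r is relabeled r, then for a nondecreasing score vector α with α_{i+β} ≤ α_i + g where
β = ⌈B⌉, the increase α_r - α_{j(r)} is at most g; moreover after relabeling every score
index in {0,...,m-1} appears exactly once. -/
theorem stmt12 (m g : ℕ) (B : ℝ) (hB : 0 ≤ B) (j : ℕ → ℕ)
    (hjm : ∀ r < m, j r < m)
    (hsorted : ∀ r r', r ≤ r' → r' < m → j r ≤ j r')
    (hG : ∀ jj : ℕ, ((((Finset.range m).filter (fun r => j r ≤ jj)).card : ℝ) ≤ (jj + 1) + B))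
    (α : ℕ → ℕ) (hmono : Monotone α)
    (hg : ∀ i, α (i + ⌈B⌉₊) ≤ α i + g) :
    (∀ r < m, α r ≤ α (j r) + g) ∧
    (∀ jj < m, ((Finset.range m).filter (fun r => r = jj)).card = 1) := by
  constructor
  · intro r hr
    have hsub : Finset.range (r + 1) ⊆ (Finset.range m).filter (fun r' => j r' ≤ j r) := by
      intro x hx
      simp only [Finset.mem_range] at hx
      simp only [Finset.mem_filter, Finset.mem_range]
      exact ⟨lt_of_lt_of_le hx hr, hsorted x r (Nat.lt_succ_iff.mp hx) hr⟩
    have hcard : (r + 1 : ℝ) ≤ (j r + 1) + B := by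
      calc (r + 1 : ℝ) = ((Finset.range (r+1)).card : ℝ) := by simp
        _ ≤ (((Finset.range m).filter (fun r' => j r' ≤ j r)).card : ℝ) := by
            exact_mod_cast Finset.card_le_card hsub
        _ ≤ (j r + 1) + B := hG (j r)
    have hrB : (r : ℝ) ≤ j r + ⌈B⌉₊ := by
      have := Nat.le_ceil B
      linarith
    have hr' : r ≤ j r + ⌈B⌉₊ := by exact_mod_cast hrB
    calc α r ≤ α (j r + ⌈B⌉₊) := hmono hr'
      _ ≤ α (j r) + g := hg (j r)
  · intro jj hjj
    rw [Finset.filter_eq']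
    simp [hjj]
end
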